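/- Let m ≥ 2 be an integer and define g_i = (∑_{j=0}^{i} C(m-1, j)) / C(m-1, i) for 0 ≤ i ≤ m-2. Then g_{i-1} < g_i for all 1 ≤ i ≤ m-2, i.e., the sequence g_i is strictly increasing. -/

import Mathlib

lemma key_choose (n i j : ℕ) (hj : j + 1 ≤ i) (hi : i ≤ n) :
    n.choose j * n.choose i ≤ n.choose (j+1) * n.choose (i-1) := by
  have hi1 : i - 1 + 1 = i := by omega
  have h1 : n.choose (j+1) * (j+1) = n.choose j * (n - j) := Nat.choose_succ_right_eq n j
  have h2 : n.choose i * i = n.choose (i-1) * (n - (i-1)) := by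
    conv_lhs => rw [← hi1]
    rw [Nat.choose_succ_right_eq]
  have hb : n - (i-1) ≤ n - j := by omega
  have hkey : (j+1) * (n - (i-1)) ≤ i * (n - j) := Nat.mul_le_mul hj hb
  have hmul : n.choose j * n.choose i * ((j+1) * i)
      ≤ n.choose (j+1) * n.choose (i-1) * ((j+1)*i) := by
    calc n.choose j * n.choose i * ((j+1)*i)
        = n.choose j * (j+1) * (n.choose i * i) := by ring
      _ = n.choose j * (j+1) * (n.choose (i-1) * (n - (i-1))) := by rw [h2]
      _ = (n.choose j * n.choose (i-1)) * ((j+1) * (n - (i-1))) := by ring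
      _ ≤ (n.choose j * n.choose (i-1)) * (i * (n - j)) := Nat.mul_le_mul_left _ hkey
      _ = (n.choose j * (n-j)) * n.choose (i-1) * i := by ring
      _ = (n.choose (j+1) * (j+1)) * n.choose (i-1) * i := by rw [h1]
      _ = n.choose (j+1) * n.choose (i-1) * ((j+1)*i) := by ring
  exact Nat.le_of_mul_le_mul_right hmul (Nat.mul_pos j.succ_pos (by omega))

/-- For `m ≥ 2` and `g_i = (∑_{j=0}^{i} C(m-1,j)) / C(m-1,i)` (for `0 ≤ i ≤ m-2`),
the sequence `g_i` is strictly increasing: `g_{i-1} < g_i` for `1 ≤ i ≤ m-2`. -/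
theorem stmt2 (m : ℕ) (hm : 2 ≤ m)
    (g : ℕ → ℚ)
    (hg : ∀ i, i ≤ m - 2 →
      g i = (∑ j ∈ Finset.range (i + 1), ((m - 1).choose j : ℚ)) / ((m - 1).choose i : ℚ)) :
    ∀ i, 1 ≤ i → i ≤ m - 2 → g (i - 1) < g i := by
  intro i h1 h2
  set n := m - 1 with hn
  have hin : i ≤ n := by omega
  rw [hg i h2, hg (i-1) (by omega)]
  have hC1 : (0:ℚ) < (n.choose (i-1) : ℚ) := by
    exact_mod_cast Nat.choose_pos (show i - 1 ≤ n by omega)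
  have hC2 : (0:ℚ) < (n.choose i : ℚ) := by exact_mod_cast Nat.choose_pos hin
  rw [div_lt_div_iff₀ hC1 hC2]
  have hnat : (∑ j ∈ Finset.range i, n.choose j) * n.choose i
      < (∑ j ∈ Finset.range (i+1), n.choose j) * n.choose (i-1) := by
    have hpos : 0 < n.choose 0 * n.choose (i-1) :=
      Nat.mul_pos (Nat.choose_pos (Nat.zero_le n)) (Nat.choose_pos (by omega))
    calc (∑ j ∈ Finset.range i, n.choose j) * n.choose i
        = ∑ j ∈ Finset.range i, n.choose j * n.choose i := by rw [Finset.sum_mul]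
      _ ≤ ∑ j ∈ Finset.range i, n.choose (j+1) * n.choose (i-1) := by
          refine Finset.sum_le_sum fun j hj => ?_
          exact key_choose n i j (Finset.mem_range.mp hj) hin
      _ < (∑ j ∈ Finset.range i, n.choose (j+1) * n.choose (i-1))
            + n.choose 0 * n.choose (i-1) := by omega
      _ = (∑ j ∈ Finset.range (i+1), n.choose j) * n.choose (i-1) := by
          rw [Finset.sum_mul, Finset.sum_range_succ']
  have hi1 : i - 1 + 1 = i := by omega
  rw [hi1]
  exact_mod_cast hnat
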